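/- Fix an integer n ≥ 2, w̄ > 0, φ ≠ 0 satisfying Assumption 1, κ > 0, ĝ ∈ 𝒢ₙ and â ∈ ℝⁿ. Define the joint-intervention value function V*_joint(ĝ, â, C) = sup { aᵀ (I − φg)⁻² a : a ∈ ℝⁿ, g ∈ 𝒢ₙ, κ‖g − ĝ‖_F² + ‖a − â‖² ≤ C }. Then lim_{C→∞} V*_joint(ĝ, â, C)/C = 1/(1 − (n−1)φw̄)² if φ > 0, and lim_{C→∞} V*_joint(ĝ, â, C)/C = 1/(1 + φw̄√(⌊n/2⌋⌈n/2⌉))² if φ < 0. -/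

import Mathlib

open Matrix

/-- The set `𝒢ₙ` of symmetric `n×n` networks with zero diagonal and weights in `[0, w̄]`. -/
def Gset (n : ℕ) (w : ℝ) : Set (Matrix (Fin n) (Fin n) ℝ) :=
  {g | g.IsSymm ∧ (∀ i, g i i = 0) ∧ ∀ i j, 0 ≤ g i j ∧ g i j ≤ w}

namespace Stmt16Aux

open Finset

noncomputable def Nrm {n : ℕ} (x : Fin n → ℝ) : ℝ := Real.sqrt (∑ i, x i ^ 2)

lemma Nrm_nonneg {n : ℕ} (x : Fin n → ℝ) : 0 ≤ Nrm x := Real.sqrt_nonneg _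

lemma Nrm_sq {n : ℕ} (x : Fin n → ℝ) : Nrm x ^ 2 = ∑ i, x i ^ 2 :=
  Real.sq_sqrt (by positivity)

lemma dot_self_eq {n : ℕ} (x : Fin n → ℝ) : x ⬝ᵥ x = ∑ i, x i ^ 2 := by
  simp [dotProduct, sq]

lemma dot_le_Nrm {n : ℕ} (x y : Fin n → ℝ) : x ⬝ᵥ y ≤ Nrm x * Nrm y := by
  simpa [dotProduct, Nrm] using Real.sum_mul_le_sqrt_mul_sqrt Finset.univ x y

lemma Nrm_add_le {n : ℕ} (x y : Fin n → ℝ) : Nrm (x + y) ≤ Nrm x + Nrm y := by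
  have h := dot_le_Nrm x y
  have hx := Nrm_sq x
  have hy := Nrm_sq y
  have hxy : Nrm (x + y) ^ 2 = ∑ i, (x i + y i) ^ 2 := Nrm_sq (x + y)
  have hexp : ∑ i, (x i + y i) ^ 2 = (∑ i, x i ^ 2) + 2 * (x ⬝ᵥ y) + ∑ i, y i ^ 2 := by
    simp only [dotProduct, add_sq]
    rw [Finset.sum_add_distrib, Finset.sum_add_distrib, Finset.mul_sum]
    ring_nf
  have h1 : Nrm (x + y) ^ 2 ≤ (Nrm x + Nrm y) ^ 2 := by
    rw [hxy, hexp]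
    nlinarith [Nrm_nonneg x, Nrm_nonneg y]
  have h2 : 0 ≤ Nrm x + Nrm y := add_nonneg (Nrm_nonneg x) (Nrm_nonneg y)
  nlinarith [Nrm_nonneg (x + y)]

lemma Nrm_smul {n : ℕ} (s : ℝ) (hs : 0 ≤ s) (x : Fin n → ℝ) : Nrm (s • x) = s * Nrm x := by
  unfold Nrm
  rw [show ∑ i, (s • x) i ^ 2 = s ^ 2 * ∑ i, x i ^ 2 by simp [Finset.mul_sum, mul_pow]]
  rw [Real.sqrt_mul (by positivity), Real.sqrt_sq hs]

lemma Nrm_pos_of_ne {n : ℕ} {x : Fin n → ℝ} (hx : x ≠ 0) : 0 < Nrm x := by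
  rcases (Nrm_nonneg x).lt_or_eq with h | h
  · exact h
  · exfalso
    apply hx
    have h0 : ∑ i, x i ^ 2 = 0 := by
      have := Nrm_sq x
      rw [← h] at this
      simpa using this.symm
    funext i
    have := (Finset.sum_eq_zero_iff_of_nonneg (fun i _ => sq_nonneg (x i))).1 h0 i (Finset.mem_univ i)
    exact pow_eq_zero_iff (by norm_num) |>.1 this

lemma Nrm_sub_ge {n : ℕ} (x y : Fin n → ℝ) : Nrm y - Nrm x ≤ Nrm (x + y) := by
  have := Nrm_add_le (x + y) (-x)
  have h : (x + y) + (-x) = y := by ring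
  rw [h] at this
  have hneg : Nrm (-x : Fin n → ℝ) = Nrm x := by unfold Nrm; simp
  linarith [this, hneg.le]




lemma quad_expand {n : ℕ} (g : Matrix (Fin n) (Fin n) ℝ) (x : Fin n → ℝ) :
    x ⬝ᵥ (g *ᵥ x) = ∑ i, ∑ j, x i * (g i j * x j) := by
  simp [dotProduct, mulVec, Finset.mul_sum]

lemma quad_pos {n : ℕ} {w : ℝ} (hw : 0 < w) {g : Matrix (Fin n) (Fin n) ℝ}
    (hg : g ∈ Gset n w) (x : Fin n → ℝ) :
    x ⬝ᵥ (g *ᵥ x) ≤ ((n : ℝ) - 1) * w * ∑ i, x i ^ 2 := by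
  obtain ⟨hsym, hdiag, hbound⟩ := hg
  rw [quad_expand]
  have key : ∑ i, ∑ j, x i * (g i j * x j) ≤
      ∑ i, ∑ j, (w * |x i| * |x j| - if j = i then w * x i ^ 2 else 0) := by
    apply Finset.sum_le_sum
    intro i _
    apply Finset.sum_le_sum
    intro j _
    by_cases hij : j = i
    · subst hij
      rw [hdiag j]
      have habs : |x j| * |x j| = x j * x j := abs_mul_abs_self _
      have hsq : x j ^ 2 = x j * x j := sq (x j)
      simp only [if_pos rfl, if_true]
      nlinarith [hw.le]
    · simp only [hij, if_false, sub_zero]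
      have h1 := (hbound i j).1
      have h2 := (hbound i j).2
      have h3 : x i * x j ≤ |x i| * |x j| := by
        rw [← abs_mul]; exact le_abs_self _
      nlinarith [abs_nonneg (x i), abs_nonneg (x j),
        mul_nonneg (sub_nonneg.2 h2) (mul_nonneg (abs_nonneg (x i)) (abs_nonneg (x j))),
        mul_nonneg h1 (sub_nonneg.2 h3)]
  have expand : ∑ i, ∑ j, (w * |x i| * |x j| - if j = i then w * x i ^ 2 else 0)
      = w * (∑ i, |x i|) ^ 2 - w * ∑ i, x i ^ 2 := by
    have e1 : ∀ i : Fin n, ∑ j, (w * |x i| * |x j| - if j = i then w * x i ^ 2 else 0)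
        = w * |x i| * (∑ j, |x j|) - w * x i ^ 2 := by
      intro i
      rw [Finset.sum_sub_distrib, ← Finset.mul_sum, Finset.sum_ite_eq' Finset.univ i]
      simp
    rw [Finset.sum_congr rfl (fun i _ => e1 i), Finset.sum_sub_distrib, ← Finset.sum_mul,
      ← Finset.mul_sum, ← Finset.mul_sum, sq]
    ring
  have cs : (∑ i, |x i|) ^ 2 ≤ (n : ℝ) * ∑ i, x i ^ 2 := by
    have := sq_sum_le_card_mul_sum_sq (s := (Finset.univ : Finset (Fin n)))
      (f := fun i => |x i|)
    simpa [sq_abs] using this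
  calc ∑ i, ∑ j, x i * (g i j * x j)
      ≤ w * (∑ i, |x i|) ^ 2 - w * ∑ i, x i ^ 2 := by rw [← expand]; exact key
    _ ≤ w * ((n : ℝ) * ∑ i, x i ^ 2) - w * ∑ i, x i ^ 2 := by nlinarith
    _ = ((n : ℝ) - 1) * w * ∑ i, x i ^ 2 := by ring



lemma nat_prod_le (n k l : ℕ) (h : k + l ≤ n) : k * l ≤ n / 2 * ((n + 1) / 2) := by
  have h4 : 4 * (k * l) ≤ (k + l) * (k + l) := by
    zify; nlinarith [sq_nonneg ((k : ℤ) - l)]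
  have h6 : 4 * (k * l) ≤ n * n := le_trans h4 (Nat.mul_le_mul h h)
  rcases Nat.even_or_odd n with ⟨m, hm⟩ | ⟨m, hm⟩
  · subst hm
    have e1 : (m + m) / 2 = m := by omega
    have e2 : (m + m + 1) / 2 = m := by omega
    rw [e1, e2]
    have h7 : 4 * (k * l) ≤ 4 * (m * m) := by nlinarith
    exact Nat.le_of_mul_le_mul_left h7 (by norm_num)
  · subst hm
    have e1 : (2 * m + 1) / 2 = m := by omega
    have e2 : (2 * m + 1 + 1) / 2 = m + 1 := by omega
    rw [e1, e2]
    have h8 : ¬ (m * (m + 1) + 1 ≤ k * l) := by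
      intro hc; nlinarith
    exact Nat.not_lt.1 (fun hc => h8 hc)

lemma quad_neg {n : ℕ} {w : ℝ} (hw : 0 < w) {g : Matrix (Fin n) (Fin n) ℝ}
    (hg : g ∈ Gset n w) (x : Fin n → ℝ) :
    -(w * Real.sqrt (((n / 2 : ℕ) : ℝ) * (((n + 1) / 2 : ℕ) : ℝ)) * ∑ i, x i ^ 2)
      ≤ x ⬝ᵥ (g *ᵥ x) := by
  obtain ⟨hsym, hdiag, hbound⟩ := hg
  set p : Fin n → ℝ := fun i => max (x i) 0 with hp
  set q : Fin n → ℝ := fun i => max (-x i) 0 with hq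
  have hp0 : ∀ i, 0 ≤ p i := fun i => le_max_right _ _
  have hq0 : ∀ i, 0 ≤ q i := fun i => le_max_right _ _
  have hxpq : ∀ i, x i = p i - q i := by
    intro i
    rcases le_total 0 (x i) with h | h
    · rw [hp, hq]; simp only
      rw [max_eq_left h, max_eq_right (by linarith)]; ring
    · rw [hp, hq]; simp only
      rw [max_eq_right h, max_eq_left (by linarith)]; ring
  have hpq0 : ∀ i, p i * q i = 0 := by
    intro i
    rcases le_total 0 (x i) with h | h
    · rw [hq]; simp only
      rw [max_eq_right (by linarith)]; ring
    · rw [hp]; simp only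
      rw [max_eq_right h]; ring
  have hsq : ∀ i, p i ^ 2 + q i ^ 2 = x i ^ 2 := by
    intro i
    have h2 := hpq0 i
    rw [hxpq i]
    linear_combination 2 * h2
  -- step 1 : termwise bound
  have step1 : -(∑ i, ∑ j, w * (p i * q j + q i * p j)) ≤ x ⬝ᵥ (g *ᵥ x) := by
    rw [quad_expand, ← Finset.sum_neg_distrib]
    apply Finset.sum_le_sum
    intro i _
    rw [← Finset.sum_neg_distrib]
    apply Finset.sum_le_sum
    intro j _
    have h1 := (hbound i j).1
    have h2 := (hbound i j).2
    rw [hxpq i, hxpq j]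
    nlinarith [mul_nonneg (sub_nonneg.2 h2)
        (add_nonneg (mul_nonneg (hp0 i) (hq0 j)) (mul_nonneg (hq0 i) (hp0 j))),
      mul_nonneg h1 (mul_nonneg (hp0 i) (hp0 j)),
      mul_nonneg h1 (mul_nonneg (hq0 i) (hq0 j))]
  -- step 2 : compute double sum
  have step2 : ∑ i, ∑ j, w * (p i * q j + q i * p j)
      = 2 * w * ((∑ i, p i) * (∑ i, q i)) := by
    have inner : ∀ i : Fin n, ∑ j, w * (p i * q j + q i * p j)
        = w * p i * (∑ j, q j) + w * q i * (∑ j, p j) := by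
      intro i
      calc ∑ j, w * (p i * q j + q i * p j)
          = ∑ j, (w * p i * q j + w * q i * p j) :=
            Finset.sum_congr rfl fun j _ => by ring
        _ = (∑ j, w * p i * q j) + ∑ j, w * q i * p j := Finset.sum_add_distrib
        _ = w * p i * (∑ j, q j) + w * q i * (∑ j, p j) := by
            rw [← Finset.mul_sum, ← Finset.mul_sum]
    rw [Finset.sum_congr rfl fun i _ => inner i, Finset.sum_add_distrib,
      ← Finset.sum_mul, ← Finset.sum_mul, ← Finset.mul_sum, ← Finset.mul_sum]
    ring
  -- step 3 : Cauchy-Schwarz with support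
  have csP : ∀ y : Fin n → ℝ, (∀ i, 0 ≤ y i) →
      (∑ i, y i) ≤ Real.sqrt ((Finset.univ.filter (fun i => y i ≠ 0)).card) *
        Real.sqrt (∑ i, y i ^ 2) := by
    intro y hy
    set s := Finset.univ.filter (fun i => y i ≠ 0) with hs
    have e : (∑ i, y i) = ∑ i ∈ s, y i := by
      rw [hs]; exact (Finset.sum_filter_ne_zero _).symm
    have cs := Real.sum_mul_le_sqrt_mul_sqrt s (fun _ => 1) y
    simp only [one_mul, one_pow] at cs
    have e2 : (∑ _i ∈ s, (1:ℝ)) = s.card := by simp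
    have mono : Real.sqrt (∑ i ∈ s, y i ^ 2) ≤ Real.sqrt (∑ i, y i ^ 2) :=
      Real.sqrt_le_sqrt (Finset.sum_le_sum_of_subset_of_nonneg (Finset.filter_subset _ _)
        (fun i _ _ => sq_nonneg _))
    rw [e]
    calc ∑ i ∈ s, y i ≤ Real.sqrt (s.card) * Real.sqrt (∑ i ∈ s, y i ^ 2) := by
          rw [← e2]; exact cs
      _ ≤ Real.sqrt (s.card) * Real.sqrt (∑ i, y i ^ 2) :=
          mul_le_mul_of_nonneg_left mono (Real.sqrt_nonneg _)
  set sp := Finset.univ.filter (fun i => p i ≠ 0) with hsp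
  set sq' := Finset.univ.filter (fun i => q i ≠ 0) with hsqf
  have hdisj : Disjoint sp sq' := by
    rw [Finset.disjoint_left]
    intro i hip hiq
    rw [hsp, Finset.mem_filter] at hip
    rw [hsqf, Finset.mem_filter] at hiq
    rcases mul_eq_zero.1 (hpq0 i) with h | h
    · exact hip.2 h
    · exact hiq.2 h
  have hcard : sp.card + sq'.card ≤ n := by
    calc sp.card + sq'.card = (sp ∪ sq').card := (Finset.card_union_of_disjoint hdisj).symm
      _ ≤ (Finset.univ : Finset (Fin n)).card := Finset.card_le_univ _
      _ = n := by simp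
  have hkl : sp.card * sq'.card ≤ n / 2 * ((n + 1) / 2) := nat_prod_le n _ _ hcard
  set P := ∑ i, p i with hP
  set Q := ∑ i, q i with hQ
  set Np := Real.sqrt (∑ i, p i ^ 2) with hNpd
  set Nq := Real.sqrt (∑ i, q i ^ 2) with hNqd
  set S := ∑ i, x i ^ 2 with hSd
  have hSsum : (∑ i, p i ^ 2) + (∑ i, q i ^ 2) = S := by
    rw [hSd, ← Finset.sum_add_distrib]; exact Finset.sum_congr rfl fun i _ => hsq i
  have hNp : Np ^ 2 = ∑ i, p i ^ 2 := Real.sq_sqrt (by positivity)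
  have hNq : Nq ^ 2 = ∑ i, q i ^ 2 := Real.sq_sqrt (by positivity)
  have hNpNq : Np * Nq ≤ S / 2 := by
    nlinarith [sq_nonneg (Np - Nq)]
  have hPbound : P ≤ Real.sqrt sp.card * Np := csP p hp0
  have hQbound : Q ≤ Real.sqrt sq'.card * Nq := csP q hq0
  have hQ0 : 0 ≤ Q := Finset.sum_nonneg fun i _ => hq0 i
  have hPQ : P * Q ≤ Real.sqrt ((sp.card : ℝ) * sq'.card) * (S / 2) := by
    calc P * Q ≤ (Real.sqrt sp.card * Np) * (Real.sqrt sq'.card * Nq) :=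
        mul_le_mul hPbound hQbound hQ0
          (mul_nonneg (Real.sqrt_nonneg _) (Real.sqrt_nonneg _))
      _ = (Real.sqrt sp.card * Real.sqrt sq'.card) * (Np * Nq) := by ring
      _ = Real.sqrt ((sp.card : ℝ) * sq'.card) * (Np * Nq) := by
          rw [Real.sqrt_mul (Nat.cast_nonneg _)]
      _ ≤ Real.sqrt ((sp.card : ℝ) * sq'.card) * (S / 2) :=
          mul_le_mul_of_nonneg_left hNpNq (Real.sqrt_nonneg _)
  have hsqrtmono : Real.sqrt ((sp.card : ℝ) * sq'.card) ≤
      Real.sqrt (((n / 2 : ℕ) : ℝ) * (((n + 1) / 2 : ℕ) : ℝ)) := by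
    apply Real.sqrt_le_sqrt
    have hc : ((sp.card * sq'.card : ℕ) : ℝ) ≤ ((n / 2 * ((n + 1) / 2) : ℕ) : ℝ) :=
      Nat.cast_le.2 hkl
    push_cast at hc
    exact hc
  have hS0 : 0 ≤ S := Finset.sum_nonneg fun i _ => sq_nonneg _
  have final : 2 * w * (P * Q)
      ≤ w * Real.sqrt (((n / 2 : ℕ) : ℝ) * (((n + 1) / 2 : ℕ) : ℝ)) * S := by
    calc 2 * w * (P * Q) ≤ 2 * w * (Real.sqrt ((sp.card : ℝ) * sq'.card) * (S / 2)) :=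
        mul_le_mul_of_nonneg_left hPQ (by linarith)
      _ ≤ 2 * w * (Real.sqrt (((n / 2 : ℕ) : ℝ) * (((n + 1) / 2 : ℕ) : ℝ)) * (S / 2)) := by
          apply mul_le_mul_of_nonneg_left _ (by linarith : (0:ℝ) ≤ 2 * w)
          exact mul_le_mul_of_nonneg_right hsqrtmono (by linarith)
      _ = w * Real.sqrt (((n / 2 : ℕ) : ℝ) * (((n + 1) / 2 : ℕ) : ℝ)) * S := by ring
  rw [step2] at step1
  calc -(w * Real.sqrt (((n / 2 : ℕ) : ℝ) * (((n + 1) / 2 : ℕ) : ℝ)) * S)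
      ≤ -(2 * w * (P * Q)) := neg_le_neg final
    _ ≤ x ⬝ᵥ (g *ᵥ x) := step1

lemma sum_sq_pos_of_ne {n : ℕ} {x : Fin n → ℝ} (hx : x ≠ 0) : 0 < ∑ i, x i ^ 2 := by
  have h := Nrm_pos_of_ne hx
  have := Nrm_sq x
  nlinarith

lemma tendsto_aux (D K : ℝ) :
    Filter.Tendsto (fun C : ℝ => (Real.sqrt (C - D) + K) ^ 2 / C) Filter.atTop (nhds 1) := by
  have h1 : Filter.Tendsto (fun C : ℝ => 1 - D / C) Filter.atTop (nhds 1) := by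
    have hD : Filter.Tendsto (fun C : ℝ => D / C) Filter.atTop (nhds 0) := by
      simpa [div_eq_mul_inv] using tendsto_inv_atTop_zero.const_mul D
    simpa using (tendsto_const_nhds (x := (1:ℝ))).sub hD
  have h2 : Filter.Tendsto (fun C : ℝ => Real.sqrt (1 - D / C)) Filter.atTop (nhds 1) := by
    have h := (Real.continuous_sqrt.tendsto 1).comp h1
    simpa [Real.sqrt_one, Function.comp_def] using h
  have h3 : Filter.Tendsto (fun C : ℝ => K / Real.sqrt C) Filter.atTop (nhds 0) := by
    have h4 : Filter.Tendsto (fun C : ℝ => Real.sqrt C⁻¹) Filter.atTop (nhds 0) := by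
      have h := (Real.continuous_sqrt.tendsto 0).comp tendsto_inv_atTop_zero
      rw [Real.sqrt_zero] at h
      exact h
    have h5 := h4.const_mul K
    rw [mul_zero] at h5
    apply h5.congr
    intro C
    rw [Real.sqrt_inv, div_eq_mul_inv]
  have h6 : Filter.Tendsto (fun C : ℝ => (Real.sqrt (1 - D / C) + K / Real.sqrt C) ^ 2)
      Filter.atTop (nhds 1) := by
    have h := (h2.add h3).pow 2
    simpa using h
  apply h6.congr'
  filter_upwards [Filter.eventually_ge_atTop (max (D + 1) 1)] with C hC
  have hC1 : (1:ℝ) ≤ C := le_trans (le_max_right _ _) hC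
  have hCD : D + 1 ≤ C := le_trans (le_max_left _ _) hC
  have hCpos : (0:ℝ) < C := by linarith
  have hs : Real.sqrt (1 - D / C) = Real.sqrt (C - D) / Real.sqrt C := by
    rw [show (1 - D / C) = (C - D) / C by field_simp,
      Real.sqrt_div (by linarith : (0:ℝ) ≤ C - D)]
  rw [hs, ← add_div, div_pow, Real.sq_sqrt hCpos.le]

lemma main_limit {n : ℕ} {w φ κ c : ℝ} (hκ : 0 < κ) (hc : 0 < c)
    (ghat : Matrix (Fin n) (Fin n) ℝ) (ahat : Fin n → ℝ)
    (hU : ∀ g ∈ Gset n w, ∀ x : Fin n → ℝ, c * ∑ i, x i ^ 2 ≤ x ⬝ᵥ ((1 - φ • g) *ᵥ x))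
    (gstar : Matrix (Fin n) (Fin n) ℝ) (hgstar : gstar ∈ Gset n w)
    (u : Fin n → ℝ) (hu : u ≠ 0)
    (heig : (1 - φ • gstar) *ᵥ u = c • u) :
    Filter.Tendsto (fun C : ℝ =>
      sSup {v : ℝ | ∃ (a : Fin n → ℝ) (g : Matrix (Fin n) (Fin n) ℝ), g ∈ Gset n w ∧
        κ * (∑ i, ∑ j, (g i j - ghat i j) ^ 2) + (∑ i, (a i - ahat i) ^ 2) ≤ C ∧
        v = a ⬝ᵥ (((1 - φ • g)⁻¹ ^ 2) *ᵥ a)} / C) Filter.atTop (nhds (1 / c ^ 2)) := by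
  set SC : ℝ → Set ℝ := fun C =>
    {v : ℝ | ∃ (a : Fin n → ℝ) (g : Matrix (Fin n) (Fin n) ℝ), g ∈ Gset n w ∧
      κ * (∑ i, ∑ j, (g i j - ghat i j) ^ 2) + (∑ i, (a i - ahat i) ^ 2) ≤ C ∧
      v = a ⬝ᵥ (((1 - φ • g)⁻¹ ^ 2) *ᵥ a)} with hSC
  -- basic facts about B = 1 - φ • g for g ∈ Gset
  have hBfacts : ∀ g ∈ Gset n w, IsUnit (1 - φ • g).det ∧
      ((1 - φ • g)⁻¹)ᵀ = (1 - φ • g)⁻¹ := by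
    intro g hg
    have hsymB : (1 - φ • g)ᵀ = 1 - φ • g := by
      rw [transpose_sub, transpose_smul, transpose_one, hg.1]
    have hpd : (1 - φ • g).PosDef := by
      rw [Matrix.posDef_iff_dotProduct_mulVec]
      constructor
      · rw [Matrix.IsHermitian, conjTranspose_eq_transpose_of_trivial]
        exact hsymB
      · intro x hx
        have h1 := hU g hg x
        have h2 : 0 < ∑ i, x i ^ 2 := sum_sq_pos_of_ne hx
        have : (0:ℝ) < c * ∑ i, x i ^ 2 := mul_pos hc h2
        simpa using lt_of_lt_of_le this h1
    refine ⟨hpd.det_pos.ne'.isUnit, ?_⟩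
    rw [Matrix.transpose_nonsing_inv, hsymB]
  -- value formula
  have hval : ∀ g ∈ Gset n w, ∀ a : Fin n → ℝ,
      a ⬝ᵥ (((1 - φ • g)⁻¹ ^ 2) *ᵥ a) = ∑ i, ((1 - φ • g)⁻¹ *ᵥ a) i ^ 2 := by
    intro g hg a
    obtain ⟨hdet, hsymInv⟩ := hBfacts g hg
    have e1 : ((1 - φ • g)⁻¹ ^ 2) *ᵥ a = (1 - φ • g)⁻¹ *ᵥ ((1 - φ • g)⁻¹ *ᵥ a) := by
      rw [Matrix.mulVec_mulVec, ← pow_two]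
    rw [e1, Matrix.dotProduct_mulVec, ← hsymInv, Matrix.vecMul_transpose, hsymInv,
      dot_self_eq]
  -- upper bound for members
  have hub : ∀ C : ℝ, 0 ≤ C → ∀ v ∈ SC C, v ≤ (Nrm ahat + Real.sqrt C) ^ 2 / c ^ 2 := by
    intro C hC v hv
    obtain ⟨a, g, hg, hcon, hveq⟩ := hv
    obtain ⟨hdet, hsymInv⟩ := hBfacts g hg
    set y := (1 - φ • g)⁻¹ *ᵥ a with hy
    have hvval : v = Nrm y ^ 2 := by rw [hveq, hval g hg a, ← Nrm_sq]
    have hBy : (1 - φ • g) *ᵥ y = a := by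
      rw [hy, Matrix.mulVec_mulVec, Matrix.mul_nonsing_inv _ hdet, Matrix.one_mulVec]
    have hquad : c * ∑ i, y i ^ 2 ≤ y ⬝ᵥ a := by
      have := hU g hg y
      rwa [hBy] at this
    have hcs : y ⬝ᵥ a ≤ Nrm y * Nrm a := dot_le_Nrm y a
    have hNy : Nrm y ≤ Nrm a / c := by
      rcases (Nrm_nonneg y).lt_or_eq with h | h
      · rw [le_div_iff₀ hc]
        have h2 : c * Nrm y ^ 2 ≤ Nrm y * Nrm a := by
          rw [Nrm_sq]; exact le_trans hquad hcs
        nlinarith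
      · rw [← h]; exact div_nonneg (Nrm_nonneg a) hc.le
    have hNa : Nrm a ≤ Nrm ahat + Real.sqrt C := by
      have h1 : a = ahat + (a - ahat) := by ring
      have h2 : Nrm a ≤ Nrm ahat + Nrm (a - ahat) := by
        conv_lhs => rw [h1]
        exact Nrm_add_le ahat (a - ahat)
      have h3 : Nrm (a - ahat) ≤ Real.sqrt C := by
        unfold Nrm
        apply Real.sqrt_le_sqrt
        have h4 : 0 ≤ κ * (∑ i, ∑ j, (g i j - ghat i j) ^ 2) := by positivity
        calc ∑ i, (a - ahat) i ^ 2 = ∑ i, (a i - ahat i) ^ 2 := by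
              exact Finset.sum_congr rfl fun i _ => by simp
          _ ≤ C := by linarith
      linarith
    have hNy2 : Nrm y ≤ (Nrm ahat + Real.sqrt C) / c := by
      apply le_trans hNy
      gcongr
    rw [hvval]
    calc Nrm y ^ 2 ≤ ((Nrm ahat + Real.sqrt C) / c) ^ 2 :=
        pow_le_pow_left₀ (Nrm_nonneg y) hNy2 2
      _ = (Nrm ahat + Real.sqrt C) ^ 2 / c ^ 2 := div_pow _ _ _
  have hbdd : ∀ C : ℝ, 0 ≤ C → BddAbove (SC C) :=
    fun C hC => ⟨(Nrm ahat + Real.sqrt C) ^ 2 / c ^ 2, fun v hv => hub C hC v hv⟩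
  -- normalized eigenvector
  have hNu := Nrm_pos_of_ne hu
  set U : Fin n → ℝ := (Nrm u)⁻¹ • u with hUdef
  have hNU : Nrm U = 1 := by
    rw [hUdef, Nrm_smul _ (inv_nonneg.2 hNu.le)]
    field_simp
  have hsumU : ∑ i, U i ^ 2 = 1 := by
    have h := Nrm_sq U
    rw [hNU] at h
    simpa using h.symm
  have heigU : (1 - φ • gstar) *ᵥ U = c • U := by
    rw [hUdef, Matrix.mulVec_smul, heig, smul_comm]
  obtain ⟨hdetS, hsymInvS⟩ := hBfacts gstar hgstar
  have hinvU : (1 - φ • gstar)⁻¹ *ᵥ U = c⁻¹ • U := by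
    have h1 : (1 - φ • gstar)⁻¹ *ᵥ ((1 - φ • gstar) *ᵥ U) = U := by
      rw [Matrix.mulVec_mulVec, Matrix.nonsing_inv_mul _ hdetS, Matrix.one_mulVec]
    rw [heigU, Matrix.mulVec_smul] at h1
    calc (1 - φ • gstar)⁻¹ *ᵥ U = c⁻¹ • (c • ((1 - φ • gstar)⁻¹ *ᵥ U)) := by
          rw [smul_smul, inv_mul_cancel₀ hc.ne', one_smul]
      _ = c⁻¹ • U := by rw [h1]
  set D : ℝ := κ * (∑ i, ∑ j, (gstar i j - ghat i j) ^ 2) with hDdef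
  have hD0 : 0 ≤ D := by positivity
  set K' : ℝ := Nrm ((1 - φ • gstar)⁻¹ *ᵥ ahat) with hK'def
  have hK'0 : 0 ≤ K' := Nrm_nonneg _
  have hlow : ∀ C : ℝ, D + (c * K') ^ 2 ≤ C →
      (Real.sqrt (C - D) - c * K') ^ 2 / c ^ 2 ≤ sSup (SC C) := by
    intro C hCge
    have hCD : D ≤ C := le_trans (by nlinarith) hCge
    have hC0 : 0 ≤ C := le_trans hD0 hCD
    set s : ℝ := Real.sqrt (C - D) with hsdef
    have hs0 : 0 ≤ s := Real.sqrt_nonneg _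
    have hs2 : s ^ 2 = C - D := Real.sq_sqrt (by linarith)
    have hsK : c * K' ≤ s := by
      rw [hsdef, show c * K' = Real.sqrt ((c * K') ^ 2) from
        (Real.sqrt_sq (by positivity)).symm]
      apply Real.sqrt_le_sqrt
      nlinarith
    set a : Fin n → ℝ := ahat + s • U with hadef
    have hmem : (a ⬝ᵥ (((1 - φ • gstar)⁻¹ ^ 2) *ᵥ a)) ∈ SC C := by
      refine ⟨a, gstar, hgstar, ?_, rfl⟩
      have e : ∑ i, (a i - ahat i) ^ 2 = s ^ 2 * ∑ i, U i ^ 2 := by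
        rw [Finset.mul_sum]
        refine Finset.sum_congr rfl fun i _ => ?_
        rw [hadef]
        simp [mul_pow]
      rw [e, hsumU, hs2]
      linarith
    have hy2 : (1 - φ • gstar)⁻¹ *ᵥ a = (1 - φ • gstar)⁻¹ *ᵥ ahat + (s * c⁻¹) • U := by
      rw [hadef, Matrix.mulVec_add, Matrix.mulVec_smul, hinvU, smul_smul]
    have hval2 : a ⬝ᵥ (((1 - φ • gstar)⁻¹ ^ 2) *ᵥ a)
        = Nrm ((1 - φ • gstar)⁻¹ *ᵥ a) ^ 2 := by
      rw [hval gstar hgstar a, ← Nrm_sq]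
    have hNlow : s * c⁻¹ - K' ≤ Nrm ((1 - φ • gstar)⁻¹ *ᵥ a) := by
      rw [hy2]
      have h := Nrm_sub_ge ((1 - φ • gstar)⁻¹ *ᵥ ahat) ((s * c⁻¹) • U)
      rw [Nrm_smul _ (by positivity), hNU, mul_one] at h
      linarith
    have htpos : 0 ≤ s * c⁻¹ - K' := by
      have h1 : 0 ≤ (s - c * K') / c := div_nonneg (by linarith) hc.le
      have h2 : (s - c * K') / c = s * c⁻¹ - K' := by field_simp
      linarith [h2 ▸ h1]
    have hsq2 : (s * c⁻¹ - K') ^ 2 ≤ Nrm ((1 - φ • gstar)⁻¹ *ᵥ a) ^ 2 :=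
      pow_le_pow_left₀ htpos hNlow 2
    have heq : (s - c * K') ^ 2 / c ^ 2 = (s * c⁻¹ - K') ^ 2 := by
      field_simp
    rw [heq]
    calc (s * c⁻¹ - K') ^ 2 ≤ Nrm ((1 - φ • gstar)⁻¹ *ᵥ a) ^ 2 := hsq2
      _ ≤ sSup (SC C) := by
          rw [← hval2]
          exact le_csSup (hbdd C hC0) hmem
  -- limit assembly
  have Tup : Filter.Tendsto (fun C : ℝ => (1 / c ^ 2) * ((Real.sqrt (C - 0) + Nrm ahat) ^ 2 / C))
      Filter.atTop (nhds (1 / c ^ 2)) := by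
    have h := (tendsto_aux 0 (Nrm ahat)).const_mul (1 / c ^ 2)
    simpa using h
  have Tlow : Filter.Tendsto
      (fun C : ℝ => (1 / c ^ 2) * ((Real.sqrt (C - D) + -(c * K')) ^ 2 / C))
      Filter.atTop (nhds (1 / c ^ 2)) := by
    have h := (tendsto_aux D (-(c * K'))).const_mul (1 / c ^ 2)
    simpa using h
  refine tendsto_of_tendsto_of_tendsto_of_le_of_le' Tlow Tup ?_ ?_
  · filter_upwards [Filter.eventually_ge_atTop (max (D + (c * K') ^ 2) 1)] with C hC
    have hC1 : (1:ℝ) ≤ C := le_trans (le_max_right _ _) hC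
    have hCge : D + (c * K') ^ 2 ≤ C := le_trans (le_max_left _ _) hC
    have hCpos : (0:ℝ) < C := by linarith
    have h1 := hlow C hCge
    have heq : (1 / c ^ 2) * ((Real.sqrt (C - D) + -(c * K')) ^ 2 / C)
        = ((Real.sqrt (C - D) - c * K') ^ 2 / c ^ 2) / C := by ring
    rw [heq]
    gcongr
  · filter_upwards [Filter.eventually_ge_atTop 1] with C hC1
    have hCpos : (0:ℝ) < C := by linarith
    have hub' : sSup (SC C) ≤ (Nrm ahat + Real.sqrt C) ^ 2 / c ^ 2 := by
      apply Real.sSup_le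
      · intro v hv
        exact hub C (by linarith) v hv
      · positivity
    have heq : (1 / c ^ 2) * ((Real.sqrt (C - 0) + Nrm ahat) ^ 2 / C)
        = ((Real.sqrt C + Nrm ahat) ^ 2 / c ^ 2) / C := by
      rw [sub_zero]; ring
    rw [heq]
    have hcomm : (Real.sqrt C + Nrm ahat) = (Nrm ahat + Real.sqrt C) := by ring
    rw [hcomm]
    gcongr

lemma complete_mem {n : ℕ} {w : ℝ} (hw : 0 < w) :
    (Matrix.of fun i j : Fin n => if i = j then (0:ℝ) else w) ∈ Gset n w := by
  refine ⟨?_, fun i => by simp, fun i j => ?_⟩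
  · ext i j
    by_cases h : i = j <;> simp [Matrix.IsSymm, Matrix.transpose_apply, h, eq_comm]
  · by_cases h : i = j <;> simp [h, hw.le, le_refl]

lemma complete_eig {n : ℕ} (w φ : ℝ) :
    (1 - φ • (Matrix.of fun i j : Fin n => if i = j then (0:ℝ) else w)) *ᵥ (fun _ => (1:ℝ))
      = (1 - ((n:ℝ) - 1) * φ * w) • (fun _ => (1:ℝ)) := by
  funext i
  have hsum : ∑ j, (if i = j then (0:ℝ) else w) = (n:ℝ) * w - w := by
    have e : ∀ j : Fin n, (if i = j then (0:ℝ) else w) = w - (if i = j then w else 0) := by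
      intro j; by_cases h : i = j <;> simp [h]
    rw [Finset.sum_congr rfl fun j _ => e j, Finset.sum_sub_distrib, Finset.sum_const,
      Finset.sum_ite_eq]
    simp [Finset.card_univ, mul_comm]
  rw [Matrix.sub_mulVec, Matrix.one_mulVec, Matrix.smul_mulVec]
  simp only [Pi.sub_apply, Pi.smul_apply, smul_eq_mul]
  have hmv : ((Matrix.of fun i j : Fin n => if i = j then (0:ℝ) else w) *ᵥ fun _ => (1:ℝ)) i
      = (n:ℝ) * w - w := by
    simp only [Matrix.mulVec, dotProduct, Matrix.of_apply, mul_one]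
    exact hsum
  rw [hmv]
  ring

lemma card_lt_filter {n m : ℕ} (hm : m ≤ n) :
    (Finset.univ.filter (fun j : Fin n => (j : ℕ) < m)).card = m := by
  rcases Nat.eq_or_lt_of_le hm with h | h
  · subst h
    have e : Finset.univ.filter (fun j : Fin m => (j : ℕ) < m) = Finset.univ := by
      apply Finset.filter_true_of_mem
      intro j _
      exact j.isLt
    rw [e, Finset.card_univ, Fintype.card_fin]
  · have e : Finset.univ.filter (fun j : Fin n => (j : ℕ) < m) = Finset.Iio ⟨m, h⟩ := by
      ext j
      simp [Finset.mem_Iio, Fin.lt_def]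
    rw [e, Fin.card_Iio]

lemma card_ge_filter {n m : ℕ} (hm : m ≤ n) :
    (Finset.univ.filter (fun j : Fin n => ¬ (j : ℕ) < m)).card = n - m := by
  have h1 := Finset.card_filter_add_card_filter_not
    (s := (Finset.univ : Finset (Fin n))) (p := fun j : Fin n => (j : ℕ) < m)
  have h2 := card_lt_filter (n := n) hm
  have h3 : (Finset.univ : Finset (Fin n)).card = n := by simp
  omega

lemma bipartite_mem {n : ℕ} {w : ℝ} (hw : 0 < w) :
    (Matrix.of fun i j : Fin n =>
      if ((i : ℕ) < n / 2 ↔ (j : ℕ) < n / 2) then (0:ℝ) else w) ∈ Gset n w := by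
  refine ⟨?_, fun i => by simp, fun i j => ?_⟩
  · ext i j
    by_cases hi : (i : ℕ) < n / 2 <;> by_cases hj : (j : ℕ) < n / 2 <;>
      simp [Matrix.IsSymm, Matrix.transpose_apply, hi, hj]
  · by_cases h : ((i : ℕ) < n / 2 ↔ (j : ℕ) < n / 2) <;> simp [h, hw.le, le_refl]

lemma bipartite_eig {n : ℕ} (hn : 2 ≤ n) (w φ : ℝ) :
    (1 - φ • (Matrix.of fun i j : Fin n =>
        if ((i : ℕ) < n / 2 ↔ (j : ℕ) < n / 2) then (0:ℝ) else w)) *ᵥ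
      (fun i : Fin n => if (i : ℕ) < n / 2 then Real.sqrt (((n + 1) / 2 : ℕ) : ℝ)
        else -Real.sqrt ((n / 2 : ℕ) : ℝ))
    = (1 + φ * w * Real.sqrt (((n / 2 : ℕ) : ℝ) * (((n + 1) / 2 : ℕ) : ℝ))) •
      (fun i : Fin n => if (i : ℕ) < n / 2 then Real.sqrt (((n + 1) / 2 : ℕ) : ℝ)
        else -Real.sqrt ((n / 2 : ℕ) : ℝ)) := by
  have hm : n / 2 ≤ n := Nat.div_le_self _ _
  have hsub : n - n / 2 = (n + 1) / 2 := by omega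
  set sm : ℝ := Real.sqrt ((n / 2 : ℕ) : ℝ) with hsmdef
  set sn : ℝ := Real.sqrt (((n + 1) / 2 : ℕ) : ℝ) with hsndef
  have hsm2 : sm ^ 2 = ((n / 2 : ℕ) : ℝ) := Real.sq_sqrt (by positivity)
  have hsn2 : sn ^ 2 = (((n + 1) / 2 : ℕ) : ℝ) := Real.sq_sqrt (by positivity)
  have hprod : Real.sqrt (((n / 2 : ℕ) : ℝ) * (((n + 1) / 2 : ℕ) : ℝ)) = sm * sn := by
    rw [Real.sqrt_mul (by positivity)]
  funext i
  rw [Matrix.sub_mulVec, Matrix.one_mulVec, Matrix.smul_mulVec]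
  simp only [Pi.sub_apply, Pi.smul_apply, smul_eq_mul, hprod]
  by_cases hi : (i : ℕ) < n / 2
  · have hmv : ((Matrix.of fun i j : Fin n =>
        if ((i : ℕ) < n / 2 ↔ (j : ℕ) < n / 2) then (0:ℝ) else w) *ᵥ
        (fun j => if (j : ℕ) < n / 2 then sn else -sm)) i
        = (((n + 1) / 2 : ℕ) : ℝ) * (w * (-sm)) := by
      simp only [Matrix.mulVec, dotProduct, Matrix.of_apply]
      have e : ∀ j : Fin n, (if ((i : ℕ) < n / 2 ↔ (j : ℕ) < n / 2) then (0:ℝ) else w) *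
          (if (j : ℕ) < n / 2 then sn else -sm)
          = if (j : ℕ) < n / 2 then 0 else w * (-sm) := by
        intro j
        by_cases hj : (j : ℕ) < n / 2 <;> simp [hi, hj]
      rw [Finset.sum_congr rfl fun j _ => e j, Finset.sum_ite, Finset.sum_const,
        Finset.sum_const, card_ge_filter hm, hsub]
      simp
    rw [hmv]
    simp only [hi, if_true]
    linear_combination -(φ * w * sm) * hsn2
  · have hmv : ((Matrix.of fun i j : Fin n =>
        if ((i : ℕ) < n / 2 ↔ (j : ℕ) < n / 2) then (0:ℝ) else w) *ᵥ
        (fun j => if (j : ℕ) < n / 2 then sn else -sm)) i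
        = ((n / 2 : ℕ) : ℝ) * (w * sn) := by
      simp only [Matrix.mulVec, dotProduct, Matrix.of_apply]
      have e : ∀ j : Fin n, (if ((i : ℕ) < n / 2 ↔ (j : ℕ) < n / 2) then (0:ℝ) else w) *
          (if (j : ℕ) < n / 2 then sn else -sm)
          = if (j : ℕ) < n / 2 then w * sn else 0 := by
        intro j
        by_cases hj : (j : ℕ) < n / 2 <;> simp [hi, hj]
      rw [Finset.sum_congr rfl fun j _ => e j, Finset.sum_ite, Finset.sum_const,
        Finset.sum_const, card_lt_filter hm]
      simp
    rw [hmv]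
    simp only [hi, if_false]
    linear_combination (φ * w * sn) * hsm2

lemma bipartite_u_ne {n : ℕ} (hn : 2 ≤ n) :
    (fun i : Fin n => if (i : ℕ) < n / 2 then Real.sqrt (((n + 1) / 2 : ℕ) : ℝ)
      else -Real.sqrt ((n / 2 : ℕ) : ℝ)) ≠ 0 := by
  intro h
  have h0 : (0 : ℕ) < n := by omega
  have hi : ((⟨0, h0⟩ : Fin n) : ℕ) < n / 2 := by
    simpa using (by omega : 0 < n / 2)
  have hc := congrFun h (⟨0, h0⟩ : Fin n)
  simp only [hi, if_true, Pi.zero_apply] at hc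
  have hpos : (0:ℝ) < (((n + 1) / 2 : ℕ) : ℝ) := by
    exact_mod_cast (by omega : 0 < (n + 1) / 2)
  have hs := Real.sqrt_pos.2 hpos
  linarith

end Stmt16Aux

/-- Proposition 2 (joint intervention): the joint-intervention value function
`V*_joint(ĝ, â, C)` satisfies `lim_{C→∞} V*_joint/C = 1/(1 − (n−1)φw̄)²` for `φ > 0`, and
`lim_{C→∞} V*_joint/C = 1/(1 + φw̄√(⌊n/2⌋⌈n/2⌉))²` for `φ < 0`. -/
theorem stmt16 (n : ℕ) (hn : 2 ≤ n) (w φ κ : ℝ) (hw : 0 < w) (hφ : φ ≠ 0) (hκ : 0 < κ)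
    (hpos : 0 < φ → w < 1 / (φ * ((n : ℝ) - 1)))
    (hnegEven : φ < 0 → Even n → w < -2 / (φ * (n : ℝ)))
    (hnegOdd : φ < 0 → Odd n → w < -2 / (φ * Real.sqrt ((n : ℝ) ^ 2 - 1)))
    (ghat : Matrix (Fin n) (Fin n) ℝ) (hghat : ghat ∈ Gset n w) (ahat : Fin n → ℝ) :
    let Vjoint : ℝ → ℝ := fun C =>
      sSup {v : ℝ | ∃ (a : Fin n → ℝ) (g : Matrix (Fin n) (Fin n) ℝ),
        g ∈ Gset n w ∧
        κ * (∑ i, ∑ j, (g i j - ghat i j) ^ 2) + (∑ i, (a i - ahat i) ^ 2) ≤ C ∧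
        v = a ⬝ᵥ (((1 - φ • g)⁻¹ ^ 2).mulVec a)}
    (0 < φ →
      Filter.Tendsto (fun C : ℝ => Vjoint C / C) Filter.atTop
        (nhds (1 / (1 - ((n : ℝ) - 1) * φ * w) ^ 2))) ∧
    (φ < 0 →
      Filter.Tendsto (fun C : ℝ => Vjoint C / C) Filter.atTop
        (nhds (1 / (1 + φ * w *
          Real.sqrt (((n / 2 : ℕ) : ℝ) * (((n + 1) / 2 : ℕ) : ℝ))) ^ 2))) := by
  --

  intro Vjoint
  have hn0 : 0 < n := by omega
  have hnR : (2:ℝ) ≤ (n:ℝ) := by exact_mod_cast hn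
  constructor
  · intro hφpos
    set c : ℝ := 1 - ((n : ℝ) - 1) * φ * w with hcdef
    have hd : 0 < φ * ((n:ℝ) - 1) := mul_pos hφpos (by linarith)
    have hwc := hpos hφpos
    have h1 : w * (φ * ((n:ℝ) - 1)) < 1 := by
      have h := (lt_div_iff₀ hd).1 hwc
      linarith
    have hc : 0 < c := by rw [hcdef]; nlinarith
    have hU : ∀ g ∈ Gset n w, ∀ x : Fin n → ℝ,
        c * ∑ i, x i ^ 2 ≤ x ⬝ᵥ ((1 - φ • g) *ᵥ x) := by
      intro g hg x
      have hq := Stmt16Aux.quad_pos hw hg x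
      have hform : x ⬝ᵥ ((1 - φ • g) *ᵥ x)
          = (∑ i, x i ^ 2) - φ * (x ⬝ᵥ (g *ᵥ x)) := by
        rw [Matrix.sub_mulVec, Matrix.one_mulVec, Matrix.smul_mulVec,
          dotProduct_sub, Stmt16Aux.dot_self_eq, dotProduct_smul, smul_eq_mul]
      rw [hform, hcdef]
      nlinarith [mul_le_mul_of_nonneg_left hq hφpos.le,
        Finset.sum_nonneg (fun i (_ : i ∈ Finset.univ) => sq_nonneg (x i))]
    have hone : (fun _ : Fin n => (1:ℝ)) ≠ 0 := by
      intro h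
      have hcf := congrFun h ⟨0, hn0⟩
      simpa using hcf
    exact Stmt16Aux.main_limit hκ hc ghat ahat hU _ (Stmt16Aux.complete_mem hw) _ hone
      (Stmt16Aux.complete_eig w φ)
  · intro hφneg
    set M : ℝ := Real.sqrt (((n / 2 : ℕ) : ℝ) * (((n + 1) / 2 : ℕ) : ℝ)) with hMdef
    have hM0 : 0 ≤ M := Real.sqrt_nonneg _
    set c : ℝ := 1 + φ * w * M with hcdef
    have hkey : (-φ) * w * M < 1 := by
      rcases Nat.even_or_odd n with heven | hodd
      · obtain ⟨k, hk⟩ := heven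
        have hk1 : 1 ≤ k := by omega
        have e1 : n / 2 = k := by omega
        have e2 : (n + 1) / 2 = k := by omega
        have hMeq : M = (k:ℝ) := by
          rw [hMdef, e1, e2, Real.sqrt_mul_self (Nat.cast_nonneg k)]
        have hd : (0:ℝ) < -(φ * (n:ℝ)) := by
          have : (0:ℝ) < (n:ℝ) := by linarith
          nlinarith
        have hwb := hnegEven hφneg ⟨k, hk⟩
        have h2 : w * (-(φ * (n:ℝ))) < 2 := by
          have h := (lt_div_iff₀ hd).1 (by rw [show -2 / (φ * (n:ℝ)) = 2 / (-(φ * (n:ℝ))) by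
            rw [div_neg, neg_div]] at hwb; exact hwb)
          linarith
        have hnk : (n:ℝ) = 2 * (k:ℝ) := by
          have : (n:ℕ) = 2 * k := by omega
          exact_mod_cast this
        rw [hMeq]
        nlinarith
      · obtain ⟨k, hk⟩ := hodd
        have hk1 : 1 ≤ k := by omega
        have e1 : n / 2 = k := by omega
        have e2 : (n + 1) / 2 = k + 1 := by omega
        have hnk : (n:ℝ) = 2 * (k:ℝ) + 1 := by
          have : (n:ℕ) = 2 * k + 1 := by omega
          exact_mod_cast this
        have hMeq : M = Real.sqrt ((k:ℝ) * ((k:ℝ) + 1)) := by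
          rw [hMdef, e1, e2]
          push_cast
          ring_nf
        have hsq4 : Real.sqrt ((n:ℝ)^2 - 1) = 2 * M := by
          rw [hMeq]
          have e3 : (n:ℝ)^2 - 1 = 4 * ((k:ℝ) * ((k:ℝ) + 1)) := by rw [hnk]; ring
          rw [e3, show (4 : ℝ) * ((k:ℝ) * ((k:ℝ) + 1)) = 2^2 * ((k:ℝ) * ((k:ℝ) + 1)) by norm_num,
            Real.sqrt_mul (by positivity), Real.sqrt_sq (by norm_num)]
        have hsqpos : 0 < Real.sqrt ((n:ℝ)^2 - 1) := by
          apply Real.sqrt_pos.2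
          nlinarith
        have hd : (0:ℝ) < -(φ * Real.sqrt ((n:ℝ)^2 - 1)) := by nlinarith
        have hwb := hnegOdd hφneg ⟨k, hk⟩
        have h2 : w * (-(φ * Real.sqrt ((n:ℝ)^2 - 1))) < 2 := by
          have h := (lt_div_iff₀ hd).1 (by
            rw [show -2 / (φ * Real.sqrt ((n:ℝ)^2 - 1))
              = 2 / (-(φ * Real.sqrt ((n:ℝ)^2 - 1))) by
              rw [div_neg, neg_div]] at hwb; exact hwb)
          linarith
        rw [hsq4] at h2
        nlinarith
    have hc : 0 < c := by rw [hcdef]; nlinarith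
    have hU : ∀ g ∈ Gset n w, ∀ x : Fin n → ℝ,
        c * ∑ i, x i ^ 2 ≤ x ⬝ᵥ ((1 - φ • g) *ᵥ x) := by
      intro g hg x
      have hq := Stmt16Aux.quad_neg hw hg x
      rw [← hMdef] at hq
      have hform : x ⬝ᵥ ((1 - φ • g) *ᵥ x)
          = (∑ i, x i ^ 2) - φ * (x ⬝ᵥ (g *ᵥ x)) := by
        rw [Matrix.sub_mulVec, Matrix.one_mulVec, Matrix.smul_mulVec,
          dotProduct_sub, Stmt16Aux.dot_self_eq, dotProduct_smul, smul_eq_mul]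
      rw [hform, hcdef]
      have h2 : 0 ≤ w * M * (∑ i, x i ^ 2) + x ⬝ᵥ (g *ᵥ x) := by linarith
      nlinarith [mul_nonneg (neg_nonneg.2 hφneg.le) h2]
    have heigB := Stmt16Aux.bipartite_eig hn w φ
    rw [← hMdef] at heigB
    exact Stmt16Aux.main_limit hκ hc ghat ahat hU _ (Stmt16Aux.bipartite_mem hw) _
      (Stmt16Aux.bipartite_u_ne hn) heigB
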